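/- Let X be a set, n ≥ 1, and suppose x₁, ..., xₙ, y₁, ..., yₙ ∈ X satisfy yᵢ ≠ xᵢ for all i and Σᵢ (yᵢ - xᵢ) = 0 in the free abelian group on X. Then there exist m with 2 ≤ m ≤ n and distinct indices i₁, ..., i_m ∈ {1, ..., n} such that x_{i₁} = y_{i₂}, x_{i₂} = y_{i₃}, ..., x_{i_{m-1}} = y_{i_m}, and x_{i_m} = y_{i₁}. -/

import Mathlib

theorem stmt_17 {X : Type*} (n : ℕ) (hn : 1 ≤ n) (x y : Fin n → X)
    (hne : ∀ i, y i ≠ x i)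
    (hsum : ∑ i, (FreeAbelianGroup.of (y i) - FreeAbelianGroup.of (x i)) = 0) :
    ∃ m : ℕ, 2 ≤ m ∧ m ≤ n ∧ ∃ idx : Fin m → Fin n, Function.Injective idx ∧
      ∀ k : Fin m, x (idx k) = y (idx (finRotate m k)) := by
  classical
  -- Step 1: fibers of x and y have equal cardinality
  have hcard : ∀ a : X, Fintype.card {i // x i = a} = Fintype.card {i // y i = a} := by
    intro a
    have hφ := congrArg (FreeAbelianGroup.lift (fun b => if b = a then (1:ℤ) else 0)) hsum
    rw [map_sum, map_zero] at hφ
    simp only [map_sub, FreeAbelianGroup.lift_apply_of, sub_eq_zero] at hφ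
    rw [Finset.sum_sub_distrib, sub_eq_zero, Finset.sum_boole, Finset.sum_boole] at hφ
    have : (Finset.univ.filter (fun i => y i = a)).card
        = (Finset.univ.filter (fun i => x i = a)).card := by exact_mod_cast hφ
    rw [Fintype.card_subtype, Fintype.card_subtype, this]
  -- Step 2: build a permutation σ with y (σ i) = x i
  have e : ∀ a : X, {i // x i = a} ≃ {i // y i = a} := fun a =>
    Fintype.equivOfCardEq (hcard a)
  let σ : Fin n ≃ Fin n := Equiv.ofFiberEquiv e
  have hσ : ∀ i, y (σ i) = x i := fun i => Equiv.ofFiberEquiv_map e i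
  have hfix : ∀ i, σ i ≠ i := by
    intro i h
    exact hne i (by rw [← hσ i, h])
  -- Step 3: cycle through i0
  set f : Fin n → Fin n := ⇑σ with hf
  have hncast : n = Nat.succ (n - 1) := (Nat.succ_pred_eq_of_pos hn).symm
  let i0 : Fin n := ⟨0, hn⟩
  have hper : Function.IsPeriodicPt f (orderOf σ) i0 := by
    show f^[orderOf σ] i0 = i0
    rw [hf, ← Equiv.Perm.coe_pow, pow_orderOf_eq_one]
    rfl
  set m := Function.minimalPeriod f i0 with hm
  have hmpos : 0 < m := hper.minimalPeriod_pos (orderOf_pos σ)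
  have hm1 : m ≠ 1 := by
    intro h
    have := Function.isPeriodicPt_minimalPeriod f i0
    rw [← hm, h] at this
    exact hfix i0 this
  have hm2 : 2 ≤ m := by omega
  have hinj : ∀ k l : ℕ, k < m → l < m → f^[k] i0 = f^[l] i0 → k = l := by
    intro k l hk hl h
    exact Function.iterate_injOn_Iio_minimalPeriod hk hl h
  have hmn : m ≤ n := by
    have : Function.Injective (fun k : Fin m => f^[(k : ℕ)] i0) := by
      intro k l h
      exact Fin.ext (hinj _ _ k.isLt l.isLt h)
    simpa using Fintype.card_le_of_injective _ this
  refine ⟨m, hm2, hmn, fun k => f^[(k : ℕ)] i0, ?_, ?_⟩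
  · intro k l h
    exact Fin.ext (hinj _ _ k.isLt l.isLt h)
  · intro k
    have hrot : ((finRotate m k : Fin m) : ℕ) = ((k : ℕ) + 1) % m := by
      rcases m with _ | m'
      · omega
      · rw [finRotate_succ_apply]
        simp [Fin.add_def]
    rw [← hσ (f^[(k : ℕ)] i0)]
    congr 1
    show f (f^[(k:ℕ)] i0) = f^[((finRotate m k : Fin m) : ℕ)] i0
    rw [hrot, Function.iterate_mod_minimalPeriod_eq, ← Function.iterate_succ_apply' f]
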